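/- Let p, q ≥ 1 and let G be the graph on {0,1,...,p+q} consisting of the complete bipartite graph with parts V_1 = {1,...,p} and V_2 = {p+1,...,p+q}, a loop at vertex 0, and all edges {0,j} for 1 ≤ j ≤ p+q. Then for every positive integer m, the number of lattice points in the m-th dilate of the edge polytope P_G equals C(p+m, p)·C(q+m, q). -/

import Mathlib

open Pointwise Finset

/-- `ρ({i,j}) = e_i + e_j` (so a loop `{i,i}` maps to `2e_i`). -/
noncomputable def rho {d : ℕ} : Sym2 (Fin d) → (Fin d → ℝ) :=
  Sym2.lift ⟨fun i j t => (if t = i then (1 : ℝ) else 0) + (if t = j then 1 else 0),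
    fun i j => funext fun t => add_comm _ _⟩

namespace Stmt10

lemma rho_mk {d : ℕ} (i j t : Fin d) :
    rho s(i, j) t = (if t = i then (1 : ℝ) else 0) + (if t = j then 1 else 0) := rfl

variable (p q : ℕ)

def i0 : Fin (p + q + 1) := ⟨0, by omega⟩

def V1 : Finset (Fin (p + q + 1)) := univ.filter (fun t => 1 ≤ t.val ∧ t.val ≤ p)
def V2 : Finset (Fin (p + q + 1)) := univ.filter (fun t => p + 1 ≤ t.val)

def E : Set (Sym2 (Fin (p + q + 1))) :=
  {e : Sym2 (Fin (p + q + 1)) |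
    (∃ j : Fin (p + q + 1), e = s(⟨0, by omega⟩, j)) ∨
    (∃ i j : Fin (p + q + 1),
      1 ≤ i.val ∧ i.val ≤ p ∧ p + 1 ≤ j.val ∧ e = s(i, j))}

variable {M : Type*} [AddCommMonoid M]

lemma sum_split (x : Fin (p + q + 1) → M) :
    ∑ t, x t = x (i0 p q) + (∑ t ∈ V1 p q, x t + ∑ t ∈ V2 p q, x t) := by
  classical
  have h1 : (univ : Finset (Fin (p + q + 1))) =
      insert (i0 p q) (V1 p q ∪ V2 p q) := by
    ext t
    simp only [mem_univ, mem_insert, mem_union, V1, V2, mem_filter, true_and, true_iff]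
    rcases Nat.lt_or_ge t.val 1 with h | h
    · left; apply Fin.ext; show t.val = 0; omega
    · right; omega
  have h2 : i0 p q ∉ V1 p q ∪ V2 p q := by
    simp [V1, V2, i0]
  have h3 : Disjoint (V1 p q) (V2 p q) := by
    rw [Finset.disjoint_left]
    intro a ha hb
    simp only [V1, V2, mem_filter] at ha hb
    omega
  rw [h1, Finset.sum_insert h2, Finset.sum_union h3]

lemma sumV1 (x : Fin (p + q + 1) → M) :
    ∑ t ∈ V1 p q, x t = ∑ i : Fin p, x ⟨i.val + 1, by omega⟩ := by
  rw [← Finset.sum_attach (V1 p q)]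
  apply Finset.sum_bij (fun t _ => (⟨t.1.val - 1, by have h2 := t.2; simp only [V1, Finset.mem_filter] at h2; omega⟩ : Fin p))
  · intro a _; exact Finset.mem_univ _
  · intro a _ b _ h
    have ha := a.1.2; have hb := b.1.2
    have ha2 := a.2; have hb2 := b.2
    simp only [V1, Finset.mem_filter] at ha2 hb2
    simp only [Fin.mk.injEq] at h
    ext1; apply Fin.ext; omega
  · intro b _
    refine ⟨⟨⟨b.val + 1, by omega⟩, ?_⟩, Finset.mem_univ _, ?_⟩
    · simp [V1]
    · apply Fin.ext; simp
  · intro a _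
    congr 1
    apply Fin.ext
    have ha2 := a.2
    simp only [V1, Finset.mem_filter] at ha2
    simp; omega

lemma sumV2 (x : Fin (p + q + 1) → M) :
    ∑ t ∈ V2 p q, x t = ∑ i : Fin q, x ⟨i.val + p + 1, by omega⟩ := by
  rw [← Finset.sum_attach (V2 p q)]
  apply Finset.sum_bij (fun t _ => (⟨t.1.val - p - 1, by have h2 := t.2; have h3 := t.1.2; simp only [V2, Finset.mem_filter] at h2; omega⟩ : Fin q))
  · intro a _; exact Finset.mem_univ _
  · intro a _ b _ h
    have ha := a.1.2; have hb := b.1.2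
    have ha2 := a.2; have hb2 := b.2
    simp only [V2, Finset.mem_filter] at ha2 hb2
    simp only [Fin.mk.injEq] at h
    ext1; apply Fin.ext; omega
  · intro b _
    refine ⟨⟨⟨b.val + p + 1, by omega⟩, ?_⟩, Finset.mem_univ _, ?_⟩
    · simp [V2]
    · apply Fin.ext; simp only [Fin.val_mk]; omega
  · intro a _
    congr 1
    apply Fin.ext
    have ha2 := a.2
    simp only [V2, Finset.mem_filter] at ha2
    simp; omega


def H : Set (Fin (p + q + 1) → ℝ) :=
  {y | (∀ t, 0 ≤ y t) ∧ ∑ t, y t = 2 ∧ ∑ t ∈ V1 p q, y t ≤ 1 ∧ ∑ t ∈ V2 p q, y t ≤ 1}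

lemma convex_H : Convex ℝ (H p q) := by
  intro y hy z hz a b ha hb hab
  obtain ⟨hy0, hy1, hy2, hy3⟩ := hy
  obtain ⟨hz0, hz1, hz2, hz3⟩ := hz
  refine ⟨fun t => ?_, ?_, ?_, ?_⟩
  · have h1 := hy0 t; have h2 := hz0 t
    simp only [Pi.add_apply, Pi.smul_apply, smul_eq_mul]
    positivity
  all_goals
    simp only [Pi.add_apply, Pi.smul_apply, smul_eq_mul, Finset.sum_add_distrib, ← Finset.mul_sum]
  · rw [hy1, hz1]; linarith
  · nlinarith [mul_le_mul_of_nonneg_left hy2 ha, mul_le_mul_of_nonneg_left hz2 hb]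
  · nlinarith [mul_le_mul_of_nonneg_left hy3 ha, mul_le_mul_of_nonneg_left hz3 hb]

lemma sum_rho_ind (A : Finset (Fin (p + q + 1))) (i j : Fin (p + q + 1)) :
    ∑ t ∈ A, rho s(i, j) t =
      (if i ∈ A then (1 : ℝ) else 0) + (if j ∈ A then 1 else 0) := by
  simp only [rho_mk, Finset.sum_add_distrib, Finset.sum_ite_eq']

lemma i0_not_V1 : i0 p q ∉ V1 p q := by simp [V1, i0]
lemma i0_not_V2 : i0 p q ∉ V2 p q := by simp [V2, i0]

lemma rho_mem_H : ∀ e ∈ E p q, rho e ∈ H p q := by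
  rintro e (⟨j, rfl⟩ | ⟨i, j, hi1, hi2, hj, rfl⟩) <;>
    refine ⟨fun t => ?_, ?_, ?_, ?_⟩
  · rw [rho_mk]; positivity
  · rw [sum_rho_ind]; simp; norm_num
  · rw [sum_rho_ind]
    have h1 : (⟨0, by omega⟩ : Fin (p + q + 1)) ∉ V1 p q := i0_not_V1 p q
    rw [if_neg h1]
    split <;> norm_num
  · rw [sum_rho_ind]
    have h1 : (⟨0, by omega⟩ : Fin (p + q + 1)) ∉ V2 p q := i0_not_V2 p q
    rw [if_neg h1]
    split <;> norm_num
  · rw [rho_mk]; positivity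
  · rw [sum_rho_ind]; simp; norm_num
  · rw [sum_rho_ind]
    have h1 : j ∉ V1 p q := by simp [V1]; omega
    have h2 : i ∈ V1 p q := by simp [V1]; omega
    rw [if_neg h1, if_pos h2]; norm_num
  · rw [sum_rho_ind]
    have h1 : i ∉ V2 p q := by simp [V2]; omega
    have h2 : j ∈ V2 p q := by simp [V2]; omega
    rw [if_neg h1, if_pos h2]; norm_num

lemma hull_subset_H : convexHull ℝ (rho '' E p q) ⊆ H p q :=
  convexHull_min (by rintro _ ⟨e, he, rfl⟩; exact rho_mem_H p q e he) (convex_H p q)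


lemma H_subset_hull : H p q ⊆ convexHull ℝ (rho '' E p q) := by
  classical
  rintro y ⟨h0, h1, h2, h3⟩
  set s1 := ∑ t ∈ V1 p q, y t with hs1
  set s2 := ∑ t ∈ V2 p q, y t with hs2
  have hs1n : 0 ≤ s1 := Finset.sum_nonneg fun t _ => h0 t
  have hs2n : 0 ≤ s2 := Finset.sum_nonneg fun t _ => h0 t
  set t0 := max 0 (s1 + s2 - 1) with ht0
  have ht0n : 0 ≤ t0 := le_max_left _ _
  have ht0s1 : t0 ≤ s1 := max_le hs1n (by linarith)
  have ht0s2 : t0 ≤ s2 := max_le hs2n (by linarith)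
  have ht0ge : s1 + s2 - 1 ≤ t0 := le_max_right _ _
  have hy0 : y (i0 p q) = 2 - s1 - s2 := by
    have hsp := sum_split p q y
    rw [h1] at hsp; linarith
  have hds1 : t0 / s1 ≤ 1 := by
    rcases eq_or_lt_of_le hs1n with h | h
    · have : t0 = 0 := le_antisymm (h ▸ ht0s1) ht0n
      simp [this]
    · exact div_le_one_of_le₀ ht0s1 hs1n
  have hds2 : t0 / s2 ≤ 1 := by
    rcases eq_or_lt_of_le hs2n with h | h
    · have : t0 = 0 := le_antisymm (h ▸ ht0s2) ht0n
      simp [this]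
    · exact div_le_one_of_le₀ ht0s2 hs2n
  set w : Fin (p + q + 1) × Fin (p + q + 1) → ℝ := fun ij =>
    if ij.1.val = 0 then
      (if ij.2.val = 0 then 1 - s1 - s2 + t0
       else if ij.2.val ≤ p then y ij.2 * (1 - t0 / s1)
       else y ij.2 * (1 - t0 / s2))
    else y ij.1 * y ij.2 * (t0 / (s1 * s2)) with hw
  set T : Finset (Fin (p + q + 1) × Fin (p + q + 1)) :=
    ({i0 p q} ×ˢ univ) ∪ ((V1 p q) ×ˢ (V2 p q)) with hT
  have hdis : Disjoint (({i0 p q} : Finset _) ×ˢ (univ : Finset (Fin (p + q + 1))))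
      ((V1 p q) ×ˢ (V2 p q)) := by
    rw [Finset.disjoint_left]
    rintro ⟨a, b⟩ ha hb
    simp only [Finset.mem_product, Finset.mem_singleton, V1, V2, Finset.mem_filter] at ha hb
    have : a.val = 0 := by rw [ha.1]; rfl
    omega
  -- values of w
  have hwV1 : ∀ j ∈ V1 p q, w (i0 p q, j) = y j * (1 - t0 / s1) := by
    intro j hj
    simp only [V1, Finset.mem_filter] at hj
    simp only [hw, i0]
    split_ifs with a b c <;> first | rfl | omega | simp [i0] at a
  have hwV2 : ∀ j ∈ V2 p q, w (i0 p q, j) = y j * (1 - t0 / s2) := by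
    intro j hj
    simp only [V2, Finset.mem_filter] at hj
    simp only [hw, i0]
    split_ifs with a b c <;> first | rfl | omega | simp [i0] at a
  have hw00 : w (i0 p q, i0 p q) = 1 - s1 - s2 + t0 := by
    simp [hw, i0]
  have hwB : ∀ i ∈ V1 p q, ∀ j : Fin (p + q + 1), w (i, j) = y i * y j * (t0 / (s1 * s2)) := by
    intro i hi j
    simp only [V1, Finset.mem_filter] at hi
    simp only [hw]
    split_ifs with a <;> first | rfl | (exfalso; omega)
  -- partial sums
  have hSA : ∑ j ∈ V1 p q, w (i0 p q, j) = s1 - t0 := by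
    rw [Finset.sum_congr rfl hwV1, ← Finset.sum_mul, ← hs1]
    rcases eq_or_ne t0 0 with h | h
    · simp [h]
    · have hpos : 0 < s1 := lt_of_lt_of_le (lt_of_le_of_ne ht0n (Ne.symm h)) ht0s1
      field_simp
  have hSB : ∑ j ∈ V2 p q, w (i0 p q, j) = s2 - t0 := by
    rw [Finset.sum_congr rfl hwV2, ← Finset.sum_mul, ← hs2]
    rcases eq_or_ne t0 0 with h | h
    · simp [h]
    · have hpos : 0 < s2 := lt_of_lt_of_le (lt_of_le_of_ne ht0n (Ne.symm h)) ht0s2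
      field_simp
  have hrow : ∀ i ∈ V1 p q, ∑ j ∈ V2 p q, w (i, j) = y i * s2 * (t0 / (s1 * s2)) := by
    intro i hi
    calc ∑ j ∈ V2 p q, w (i, j)
        = ∑ j ∈ V2 p q, y j * (y i * (t0 / (s1 * s2))) :=
          Finset.sum_congr rfl (fun j _ => by rw [hwB i hi j]; ring)
      _ = s2 * (y i * (t0 / (s1 * s2))) := by rw [← Finset.sum_mul, ← hs2]
      _ = y i * s2 * (t0 / (s1 * s2)) := by ring
  have hcol : ∀ j ∈ V2 p q, ∑ i ∈ V1 p q, w (i, j) = y j * s1 * (t0 / (s1 * s2)) := by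
    intro j hj
    calc ∑ i ∈ V1 p q, w (i, j)
        = ∑ i ∈ V1 p q, y i * (y j * (t0 / (s1 * s2))) :=
          Finset.sum_congr rfl (fun i hi => by rw [hwB i hi j]; ring)
      _ = s1 * (y j * (t0 / (s1 * s2))) := by rw [← Finset.sum_mul, ← hs1]
      _ = y j * s1 * (t0 / (s1 * s2)) := by ring
  have hSC : ∑ ij ∈ (V1 p q) ×ˢ (V2 p q), w ij = t0 := by
    rw [Finset.sum_product]
    calc ∑ i ∈ V1 p q, ∑ j ∈ V2 p q, w (i, j)
        = ∑ i ∈ V1 p q, y i * (s2 * (t0 / (s1 * s2))) :=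
          Finset.sum_congr rfl (fun i hi => by rw [hrow i hi]; ring)
      _ = s1 * (s2 * (t0 / (s1 * s2))) := by rw [← Finset.sum_mul, ← hs1]
      _ = t0 := by
          rcases eq_or_ne t0 0 with h | h
          · simp [h]
          · have hp1 : 0 < s1 := lt_of_lt_of_le (lt_of_le_of_ne ht0n (Ne.symm h)) ht0s1
            have hp2 : 0 < s2 := lt_of_lt_of_le (lt_of_le_of_ne ht0n (Ne.symm h)) ht0s2
            field_simp
  have hSfirst : ∑ j : Fin (p + q + 1), w (i0 p q, j) = 1 - t0 := by
    rw [sum_split p q (fun j => w (i0 p q, j)), hw00, hSA, hSB]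
    ring
  have hsum1 : ∑ ij ∈ T, w ij = 1 := by
    rw [hT, Finset.sum_union hdis, hSC, Finset.sum_product, Finset.sum_singleton, hSfirst]
    ring
  have hvec : ∑ ij ∈ T, w ij • rho s(ij.1, ij.2) = y := by
    funext t
    rw [Finset.sum_apply]
    have hterm : ∀ ij : Fin (p + q + 1) × Fin (p + q + 1),
        (w ij • rho s(ij.1, ij.2)) t
          = w ij * (if t = ij.1 then 1 else 0) + w ij * (if t = ij.2 then 1 else 0) := by
      rintro ⟨a, b⟩
      simp only [Pi.smul_apply, smul_eq_mul]
      rw [rho_mk]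
      ring
    rw [Finset.sum_congr rfl (fun ij _ => hterm ij)]
    rw [hT, Finset.sum_union hdis, Finset.sum_product, Finset.sum_singleton,
      Finset.sum_product]
    rcases (show t.val = 0 ∨ (1 ≤ t.val ∧ t.val ≤ p) ∨ p + 1 ≤ t.val by omega) with h | h | h
    · have ht : t = i0 p q := by apply Fin.ext; simpa [i0] using h
      subst ht
      have e1 : ∑ j : Fin (p + q + 1),
          (w (i0 p q, j) * (if i0 p q = i0 p q then 1 else 0)
            + w (i0 p q, j) * (if i0 p q = j then 1 else 0))
          = (1 - t0) + (1 - s1 - s2 + t0) := by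
        rw [Finset.sum_add_distrib]
        have p1 : ∑ j : Fin (p + q + 1),
            w (i0 p q, j) * (if i0 p q = i0 p q then 1 else 0) = 1 - t0 := by
          simpa using hSfirst
        have p2 : ∑ j : Fin (p + q + 1),
            w (i0 p q, j) * (if i0 p q = j then 1 else 0) = w (i0 p q, i0 p q) := by
          simp only [mul_ite, mul_one, mul_zero]
          rw [Finset.sum_ite_eq, if_pos (Finset.mem_univ _)]
        rw [p1, p2, hw00]
      rw [e1]
      have e2 : ∑ i ∈ V1 p q, ∑ j ∈ V2 p q,
          (w (i, j) * (if i0 p q = i then 1 else 0)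
            + w (i, j) * (if i0 p q = j then 1 else 0)) = 0 := by
        apply Finset.sum_eq_zero; intro i hi
        apply Finset.sum_eq_zero; intro j hj
        simp only [V1, V2, Finset.mem_filter] at hi hj
        rw [if_neg, if_neg]
        · ring
        · intro heq; have : (i0 p q).val = j.val := by rw [heq]
          simp [i0] at this; omega
        · intro heq; have : (i0 p q).val = i.val := by rw [heq]
          simp [i0] at this; omega
      rw [e2, hy0]
      ring
    · have htV1 : t ∈ V1 p q := Finset.mem_filter.mpr ⟨Finset.mem_univ _, h⟩
      have e1 : ∑ j : Fin (p + q + 1),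
          (w (i0 p q, j) * (if t = i0 p q then 1 else 0)
            + w (i0 p q, j) * (if t = j then 1 else 0))
          = y t * (1 - t0 / s1) := by
        have hne : t ≠ i0 p q := by
          intro heq; have : t.val = (i0 p q).val := by rw [heq]
          change t.val = 0 at this; omega
        simp only [if_neg hne, mul_zero, zero_add, mul_ite, mul_one]
        rw [Finset.sum_ite_eq, if_pos (Finset.mem_univ _), hwV1 t htV1]
      rw [e1]
      have e2 : ∑ i ∈ V1 p q, ∑ j ∈ V2 p q,
          (w (i, j) * (if t = i then 1 else 0)
            + w (i, j) * (if t = j then 1 else 0))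
          = y t * s2 * (t0 / (s1 * s2)) := by
        have einner : ∀ i ∈ V1 p q, ∑ j ∈ V2 p q,
            (w (i, j) * (if t = i then 1 else 0)
              + w (i, j) * (if t = j then 1 else 0))
            = (if t = i then ∑ j ∈ V2 p q, w (i, j) else 0) := by
          intro i hi
          rw [Finset.sum_add_distrib]
          have z1 : ∑ j ∈ V2 p q, w (i, j) * (if t = j then 1 else 0) = 0 := by
            apply Finset.sum_eq_zero; intro j hj
            simp only [V2, Finset.mem_filter] at hj
            rw [if_neg]; · ring
            · intro heq; have : t.val = j.val := by rw [heq]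
              omega
          rw [z1, add_zero, ← Finset.sum_mul]
          split_ifs <;> ring
        rw [Finset.sum_congr rfl einner, Finset.sum_ite_eq, if_pos htV1, hrow t htV1]
      rw [e2]
      rcases eq_or_ne t0 0 with hz | hz
      · simp [hz]
      · have hp1 : 0 < s1 := lt_of_lt_of_le (lt_of_le_of_ne ht0n (Ne.symm hz)) ht0s1
        have hp2 : 0 < s2 := lt_of_lt_of_le (lt_of_le_of_ne ht0n (Ne.symm hz)) ht0s2
        field_simp
        ring
    · have htV2 : t ∈ V2 p q := Finset.mem_filter.mpr ⟨Finset.mem_univ _, h⟩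
      have e1 : ∑ j : Fin (p + q + 1),
          (w (i0 p q, j) * (if t = i0 p q then 1 else 0)
            + w (i0 p q, j) * (if t = j then 1 else 0))
          = y t * (1 - t0 / s2) := by
        have hne : t ≠ i0 p q := by
          intro heq; have : t.val = (i0 p q).val := by rw [heq]
          change t.val = 0 at this; omega
        simp only [if_neg hne, mul_zero, zero_add, mul_ite, mul_one]
        rw [Finset.sum_ite_eq, if_pos (Finset.mem_univ _), hwV2 t htV2]
      rw [e1]
      have e2 : ∑ i ∈ V1 p q, ∑ j ∈ V2 p q,
          (w (i, j) * (if t = i then 1 else 0)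
            + w (i, j) * (if t = j then 1 else 0))
          = y t * s1 * (t0 / (s1 * s2)) := by
        have einner : ∀ i ∈ V1 p q, ∑ j ∈ V2 p q,
            (w (i, j) * (if t = i then 1 else 0)
              + w (i, j) * (if t = j then 1 else 0))
            = w (i, t) := by
          intro i hi
          rw [Finset.sum_add_distrib]
          have z1 : ∑ j ∈ V2 p q, w (i, j) * (if t = i then 1 else 0) = 0 := by
            apply Finset.sum_eq_zero; intro j hj
            simp only [V1, Finset.mem_filter] at hi
            rw [if_neg]; · ring
            · intro heq; have : t.val = i.val := by rw [heq]
              omega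
          rw [z1, zero_add]
          simp only [mul_ite, mul_one, mul_zero]
          rw [Finset.sum_ite_eq, if_pos htV2]
        rw [Finset.sum_congr rfl einner, hcol t htV2]
      rw [e2]
      rcases eq_or_ne t0 0 with hz | hz
      · simp [hz]
      · have hp1 : 0 < s1 := lt_of_lt_of_le (lt_of_le_of_ne ht0n (Ne.symm hz)) ht0s1
        have hp2 : 0 < s2 := lt_of_lt_of_le (lt_of_le_of_ne ht0n (Ne.symm hz)) ht0s2
        field_simp
        ring
  have hw0 : ∀ ij ∈ T, 0 ≤ w ij := by
    rintro ⟨a, b⟩ hab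
    rw [hT, Finset.mem_union] at hab
    rcases hab with hab | hab
    · rw [Finset.mem_product, Finset.mem_singleton] at hab
      have ha : a = i0 p q := hab.1
      subst ha
      simp only [hw]
      split_ifs with h1 h2 h3
      · linarith
      · exact mul_nonneg (h0 b) (by linarith)
      · exact mul_nonneg (h0 b) (by linarith)
      · exfalso; simp [i0] at h1
    · rw [Finset.mem_product] at hab
      rw [hwB a hab.1 b]
      exact mul_nonneg (mul_nonneg (h0 a) (h0 b))
        (div_nonneg ht0n (mul_nonneg hs1n hs2n))
  have hpos : (0 : ℝ) < ∑ ij ∈ T, w ij := by rw [hsum1]; norm_num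
  have hmem : ∀ ij ∈ T, rho s(ij.1, ij.2) ∈ rho '' E p q := by
    rintro ⟨a, b⟩ hab
    rw [hT, Finset.mem_union] at hab
    rcases hab with hab | hab
    · rw [Finset.mem_product, Finset.mem_singleton] at hab
      have ha : a = i0 p q := hab.1
      exact ⟨s(a, b), Or.inl ⟨b, by rw [ha]; rfl⟩, rfl⟩
    · rw [Finset.mem_product] at hab
      have ha := Finset.mem_filter.mp hab.1
      have hb := Finset.mem_filter.mp hab.2
      exact ⟨s(a, b), Or.inr ⟨a, b, ha.2.1, ha.2.2, hb.2, rfl⟩, rfl⟩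
  have hcm := Finset.centerMass_mem_convexHull T hw0 hpos hmem
  rwa [Finset.centerMass_eq_of_sum_1 _ _ hsum1, hvec] at hcm


lemma mem_hull_iff (y : Fin (p + q + 1) → ℝ) :
    y ∈ convexHull ℝ (rho '' E p q) ↔ y ∈ H p q :=
  ⟨fun h => hull_subset_H p q h, fun h => H_subset_hull p q h⟩

lemma mem_scaled {m : ℕ} (hm : 0 < m) (x : Fin (p + q + 1) → ℝ) :
    x ∈ (m : ℝ) • convexHull ℝ (rho '' E p q) ↔
      ((∀ t, 0 ≤ x t) ∧ ∑ t, x t = 2 * m ∧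
        ∑ t ∈ V1 p q, x t ≤ m ∧ ∑ t ∈ V2 p q, x t ≤ m) := by
  have hm' : (0 : ℝ) < m := by exact_mod_cast hm
  rw [Set.mem_smul_set_iff_inv_smul_mem₀ (ne_of_gt hm'), mem_hull_iff]
  have happ : ∀ t, ((m : ℝ)⁻¹ • x) t = (m : ℝ)⁻¹ * x t := fun t => rfl
  have hsum : ∀ A : Finset (Fin (p + q + 1)),
      ∑ t ∈ A, ((m : ℝ)⁻¹ • x) t = (m : ℝ)⁻¹ * ∑ t ∈ A, x t := by
    intro A; simp [happ, Finset.mul_sum]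
  constructor
  · rintro ⟨h0, h1, h2, h3⟩
    rw [hsum] at h1 h2 h3
    refine ⟨fun t => ?_, ?_, ?_, ?_⟩
    · have hh := h0 t; rw [happ] at hh
      calc (0:ℝ) ≤ (m : ℝ) * ((m : ℝ)⁻¹ * x t) := mul_nonneg hm'.le hh
        _ = x t := by field_simp
    · have : (m : ℝ) * ((m : ℝ)⁻¹ * ∑ t, x t) = (m : ℝ) * 2 := by rw [h1]
      rw [← mul_assoc, mul_inv_cancel₀ (ne_of_gt hm'), one_mul] at this
      linarith
    · have := mul_le_mul_of_nonneg_left h2 (le_of_lt hm')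
      rw [← mul_assoc, mul_inv_cancel₀ (ne_of_gt hm'), one_mul, mul_one] at this
      linarith
    · have := mul_le_mul_of_nonneg_left h3 (le_of_lt hm')
      rw [← mul_assoc, mul_inv_cancel₀ (ne_of_gt hm'), one_mul, mul_one] at this
      linarith
  · rintro ⟨h0, h1, h2, h3⟩
    refine ⟨fun t => ?_, ?_, ?_, ?_⟩
    · rw [happ]; exact mul_nonneg (by positivity) (h0 t)
    · rw [hsum, h1]; field_simp; try ring
    · rw [hsum, inv_mul_le_iff₀ hm']; linarith
    · rw [hsum, inv_mul_le_iff₀ hm']; linarith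

def Phi (f : Fin (p + 1) → ℕ) (g : Fin (q + 1) → ℕ) : Fin (p + q + 1) → ℝ :=
  fun t =>
    if t.val = 0 then ((f ⟨p, by omega⟩ : ℕ) : ℝ) + ((g ⟨q, by omega⟩ : ℕ) : ℝ)
    else if h : t.val ≤ p then ((f ⟨t.val - 1, by omega⟩ : ℕ) : ℝ)
    else ((g ⟨t.val - p - 1, by have := t.isLt; omega⟩ : ℕ) : ℝ)

lemma Phi_nat (f : Fin (p + 1) → ℕ) (g : Fin (q + 1) → ℕ) (t : Fin (p + q + 1)) :
    ∃ n : ℕ, Phi p q f g t = (n : ℝ) := by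
  unfold Phi
  split_ifs with h1 h2
  · exact ⟨f ⟨p, by omega⟩ + g ⟨q, by omega⟩, by push_cast; ring⟩
  · exact ⟨_, rfl⟩
  · exact ⟨_, rfl⟩

lemma Phi_zero (f : Fin (p + 1) → ℕ) (g : Fin (q + 1) → ℕ) :
    Phi p q f g (i0 p q) = ((f ⟨p, by omega⟩ : ℕ) : ℝ) + ((g ⟨q, by omega⟩ : ℕ) : ℝ) := by
  unfold Phi
  rw [if_pos]
  rfl

lemma Phi_V1 (f : Fin (p + 1) → ℕ) (g : Fin (q + 1) → ℕ) (i : Fin p) :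
    Phi p q f g ⟨i.val + 1, by omega⟩ = ((f ⟨i.val, by omega⟩ : ℕ) : ℝ) := by
  unfold Phi
  rw [if_neg (by simp), dif_pos (by simp)]
  norm_cast

lemma Phi_V2 (f : Fin (p + 1) → ℕ) (g : Fin (q + 1) → ℕ) (i : Fin q) :
    Phi p q f g ⟨i.val + p + 1, by omega⟩ = ((g ⟨i.val, by omega⟩ : ℕ) : ℝ) := by
  unfold Phi
  rw [if_neg (by simp), dif_neg (by simp)]
  norm_cast
  congr 1
  apply Fin.ext
  simp only [Fin.val_mk]
  omega


def bld (n : ℕ) (v : Fin n → ℕ) (r : ℕ) : Fin (n + 1) → ℕ :=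
  fun i => if h : i.val < n then v ⟨i.val, h⟩ else r

lemma sum_bld (n : ℕ) (v : Fin n → ℕ) (r : ℕ) :
    ∑ i, bld n v r i = (∑ i, v i) + r := by
  rw [Fin.sum_univ_castSucc]
  congr 1
  · exact Finset.sum_congr rfl fun i _ => dif_pos i.isLt
  · exact dif_neg (by simp)

lemma card_pi (k n : ℕ) :
    (Finset.piAntidiag (univ : Finset (Fin k)) n).card = (n + k - 1).choose n := by
  rw [← Finset.map_sym_eq_piAntidiag, Finset.card_map, Finset.sym_univ, Finset.card_univ,
    Sym.card_sym_eq_choose]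
  simp [Nat.add_comm]

end Stmt10

open Stmt10 in
theorem stmt10 (p q m : ℕ) (hp : 1 ≤ p) (hq : 1 ≤ q) (hm : 0 < m) :
    Set.ncard {x : Fin (p + q + 1) → ℝ |
        x ∈ (m : ℝ) • convexHull ℝ
          (rho '' {e : Sym2 (Fin (p + q + 1)) |
            (∃ j : Fin (p + q + 1), e = s(⟨0, by omega⟩, j)) ∨
            (∃ i j : Fin (p + q + 1),
              1 ≤ i.val ∧ i.val ≤ p ∧ p + 1 ≤ j.val ∧ e = s(i, j))}) ∧
        ∀ t, ∃ z : ℤ, x t = (z : ℝ)} =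
      Nat.choose (p + m) p * Nat.choose (q + m) q := by
  classical
  show Set.ncard {x : Fin (p + q + 1) → ℝ |
      x ∈ (m : ℝ) • convexHull ℝ (rho '' E p q) ∧ ∀ t, ∃ z : ℤ, x t = (z : ℝ)} = _
  set T1 := Finset.piAntidiag (univ : Finset (Fin (p + 1))) m with hT1
  set T2 := Finset.piAntidiag (univ : Finset (Fin (q + 1))) m with hT2
  have hmemT1 : ∀ f : Fin (p + 1) → ℕ, f ∈ T1 ↔ ∑ i, f i = m := by
    intro f; rw [hT1, Finset.mem_piAntidiag]; simp
  have hmemT2 : ∀ g : Fin (q + 1) → ℕ, g ∈ T2 ↔ ∑ i, g i = m := by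
    intro g; rw [hT2, Finset.mem_piAntidiag]; simp
  have key : {x : Fin (p + q + 1) → ℝ |
      x ∈ (m : ℝ) • convexHull ℝ (rho '' E p q) ∧ ∀ t, ∃ z : ℤ, x t = (z : ℝ)}
      = (fun fg : (Fin (p + 1) → ℕ) × (Fin (q + 1) → ℕ) => Phi p q fg.1 fg.2)
          '' ↑(T1 ×ˢ T2) := by
    ext x
    simp only [Set.mem_setOf_eq, Set.mem_image, Finset.coe_product, Set.mem_prod,
      Finset.mem_coe]
    constructor
    · rintro ⟨hx, hint⟩
      rw [mem_scaled p q hm] at hx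
      obtain ⟨h0, h1, h2, h3⟩ := hx
      choose z hz using hint
      have hzn : ∀ t, 0 ≤ z t := fun t => by
        have := h0 t; rw [hz t] at this; exact_mod_cast this
      have hxa : ∀ t, x t = (((z t).toNat : ℕ) : ℝ) := fun t => by
        rw [hz t]; exact_mod_cast (Int.toNat_of_nonneg (hzn t)).symm
      set a : Fin (p + q + 1) → ℕ := fun t => (z t).toNat with ha
      have hc1 : ∑ t ∈ V1 p q, x t = ((∑ t ∈ V1 p q, a t : ℕ) : ℝ) := by
        push_cast; exact Finset.sum_congr rfl fun t _ => hxa t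
      have hc2 : ∑ t ∈ V2 p q, x t = ((∑ t ∈ V2 p q, a t : ℕ) : ℝ) := by
        push_cast; exact Finset.sum_congr rfl fun t _ => hxa t
      have hct : ∑ t, x t = ((∑ t, a t : ℕ) : ℝ) := by
        push_cast; exact Finset.sum_congr rfl fun t _ => hxa t
      set sA := ∑ t ∈ V1 p q, a t with hsA
      set sB := ∑ t ∈ V2 p q, a t with hsB
      have hA : sA ≤ m := by rw [hc1] at h2; exact_mod_cast h2
      have hB : sB ≤ m := by rw [hc2] at h3; exact_mod_cast h3
      have hTt : ∑ t, a t = 2 * m := by rw [hct] at h1; exact_mod_cast h1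
      have hsplitN := sum_split p q a
      rw [hTt] at hsplitN
      refine ⟨(bld p (fun i => a ⟨i.val + 1, by omega⟩) (m - sA),
               bld q (fun i => a ⟨i.val + p + 1, by omega⟩) (m - sB)), ⟨?_, ?_⟩, ?_⟩
      · show bld p (fun i => a ⟨i.val + 1, by omega⟩) (m - sA) ∈ T1
        have e1 : (∑ i : Fin p, a ⟨i.val + 1, by omega⟩) = sA := by
          rw [hsA]; exact (sumV1 p q a).symm
        rw [hmemT1, sum_bld, e1]
        omega
      · show bld q (fun i => a ⟨i.val + p + 1, by omega⟩) (m - sB) ∈ T2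
        have e1 : (∑ i : Fin q, a ⟨i.val + p + 1, by omega⟩) = sB := by
          rw [hsB]; exact (sumV2 p q a).symm
        rw [hmemT2, sum_bld, e1]
        omega
      · show Phi p q (bld p (fun i => a ⟨i.val + 1, by omega⟩) (m - sA))
            (bld q (fun i => a ⟨i.val + p + 1, by omega⟩) (m - sB)) = x
        funext t
        rw [hxa t]
        show Phi p q _ _ t = ((a t : ℕ) : ℝ)
        unfold Phi bld
        rcases (show t.val = 0 ∨ (1 ≤ t.val ∧ t.val ≤ p) ∨ p + 1 ≤ t.val by omega)
          with h | h | h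
        · rw [if_pos h, dif_neg (by simp), dif_neg (by simp)]
          have ht : a t = a (i0 p q) := by
            congr 1; apply Fin.ext; simpa [i0] using h
          rw [ht]
          have hgoal : (m - sA) + (m - sB) = a (i0 p q) := by omega
          exact_mod_cast hgoal
        · rw [if_neg (by omega), dif_pos (by omega : t.val ≤ p),
            dif_pos (by omega : t.val - 1 < p)]
          norm_cast
          show a ⟨t.val - 1 + 1, by omega⟩ = a t
          congr 1
          apply Fin.ext
          simp only [Fin.val_mk]
          omega
        · rw [if_neg (by omega), dif_neg (by omega : ¬ t.val ≤ p),
            dif_pos (show t.val - p - 1 < q by have := t.isLt; omega)]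
          norm_cast
          show a ⟨t.val - p - 1 + p + 1, by have := t.isLt; omega⟩ = a t
          congr 1
          apply Fin.ext
          simp only [Fin.val_mk]
          omega
    · rintro ⟨⟨f, g⟩, hmem, heq⟩
      have hf : ∑ i, f i = m := (hmemT1 f).mp hmem.1
      have hg : ∑ i, g i = m := (hmemT2 g).mp hmem.2
      subst heq
      have hFA : (∑ i : Fin p, f i.castSucc) + f (Fin.last p) = m := by
        rw [← Fin.sum_univ_castSucc]; exact hf
      have hGA : (∑ i : Fin q, g i.castSucc) + g (Fin.last q) = m := by
        rw [← Fin.sum_univ_castSucc]; exact hg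
      have hV1 : ∑ t ∈ V1 p q, Phi p q f g t
          = ((∑ i : Fin p, f i.castSucc : ℕ) : ℝ) := by
        rw [sumV1 p q]
        push_cast
        exact Finset.sum_congr rfl fun i _ => Phi_V1 p q f g i
      have hV2 : ∑ t ∈ V2 p q, Phi p q f g t
          = ((∑ i : Fin q, g i.castSucc : ℕ) : ℝ) := by
        rw [sumV2 p q]
        push_cast
        exact Finset.sum_congr rfl fun i _ => Phi_V2 p q f g i
      have hzero : Phi p q f g (i0 p q)
          = ((f (Fin.last p) : ℕ) : ℝ) + ((g (Fin.last q) : ℕ) : ℝ) := Phi_zero p q f g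
      constructor
      · rw [mem_scaled p q hm]
        refine ⟨fun t => ?_, ?_, ?_, ?_⟩
        · obtain ⟨n, hn⟩ := Phi_nat p q f g t
          show (0 : ℝ) ≤ Phi p q f g t
          rw [hn]; positivity
        · show ∑ t, Phi p q f g t = 2 * (m : ℝ)
          rw [sum_split p q, hV1, hV2, hzero]
          have hgoal : f (Fin.last p) + g (Fin.last q)
              + ((∑ i : Fin p, f i.castSucc) + (∑ i : Fin q, g i.castSucc)) = 2 * m := by
            omega
          exact_mod_cast hgoal
        · show ∑ t ∈ V1 p q, Phi p q f g t ≤ (m : ℝ)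
          rw [hV1]
          have hle : (∑ i : Fin p, f i.castSucc) ≤ m := by omega
          exact_mod_cast hle
        · show ∑ t ∈ V2 p q, Phi p q f g t ≤ (m : ℝ)
          rw [hV2]
          have hle : (∑ i : Fin q, g i.castSucc) ≤ m := by omega
          exact_mod_cast hle
      · intro t
        obtain ⟨n, hn⟩ := Phi_nat p q f g t
        exact ⟨(n : ℤ), by show Phi p q f g t = _; rw [hn]; norm_cast⟩
  have hinj : Set.InjOn
      (fun fg : (Fin (p + 1) → ℕ) × (Fin (q + 1) → ℕ) => Phi p q fg.1 fg.2)
      ↑(T1 ×ˢ T2) := by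
    rintro ⟨f, g⟩ hfg ⟨f', g'⟩ hfg' heq
    rw [Finset.mem_coe, Finset.mem_product] at hfg hfg'
    have hf := (hmemT1 f).mp hfg.1
    have hf' := (hmemT1 f').mp hfg'.1
    have hg := (hmemT2 g).mp hfg.2
    have hg' := (hmemT2 g').mp hfg'.2
    have heq' : Phi p q f g = Phi p q f' g' := heq
    have hfe : ∀ i : Fin p, f i.castSucc = f' i.castSucc := by
      intro i
      have h1 := congrFun heq' ⟨i.val + 1, by omega⟩
      rw [Phi_V1, Phi_V1] at h1
      exact_mod_cast h1
    have hge : ∀ i : Fin q, g i.castSucc = g' i.castSucc := by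
      intro i
      have h1 := congrFun heq' ⟨i.val + p + 1, by omega⟩
      rw [Phi_V2, Phi_V2] at h1
      exact_mod_cast h1
    have hsf : (∑ i : Fin p, f i.castSucc) = ∑ i : Fin p, f' i.castSucc :=
      Finset.sum_congr rfl fun i _ => hfe i
    have hlf : f (Fin.last p) = f' (Fin.last p) := by
      rw [Fin.sum_univ_castSucc] at hf hf'
      omega
    have hsg : (∑ i : Fin q, g i.castSucc) = ∑ i : Fin q, g' i.castSucc :=
      Finset.sum_congr rfl fun i _ => hge i
    have hlg : g (Fin.last q) = g' (Fin.last q) := by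
      rw [Fin.sum_univ_castSucc] at hg hg'
      omega
    have hff : f = f' := by
      funext i
      by_cases h : i.val < p
      · have hh : i = (⟨i.val, h⟩ : Fin p).castSucc := Fin.ext rfl
        rw [hh]; exact hfe _
      · have hh : i = Fin.last p := Fin.ext (by simp [Fin.last]; omega)
        rw [hh]; exact hlf
    have hgg : g = g' := by
      funext i
      by_cases h : i.val < q
      · have hh : i = (⟨i.val, h⟩ : Fin q).castSucc := Fin.ext rfl
        rw [hh]; exact hge _
      · have hh : i = Fin.last q := Fin.ext (by simp [Fin.last]; omega)
        rw [hh]; exact hlg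
    rw [Prod.ext_iff]
    exact ⟨hff, hgg⟩
  rw [key, Set.ncard_image_of_injOn hinj, Set.ncard_coe_finset, Finset.card_product,
    Stmt10.card_pi, Stmt10.card_pi]
  have e1 : m + (p + 1) - 1 = p + m := by omega
  have e2 : m + (q + 1) - 1 = q + m := by omega
  rw [e1, e2]
  have e3 : (p + m).choose m = (p + m).choose p := by
    rw [← Nat.choose_symm (Nat.le_add_left m p)]
    congr 1
    omega
  have e4 : (q + m).choose m = (q + m).choose q := by
    rw [← Nat.choose_symm (Nat.le_add_left m q)]
    congr 1
    omega
  rw [e3, e4]
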